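/- The alpha divergence is monotone under restriction to a sub-σ-algebra: if P ≪ Q are probability measures on (X, F) and G ⊆ F is a sub-σ-algebra, then D̃_α(P|_G ‖ Q|_G) ≤ D̃_α(P ‖ Q) for all α > 1 (data processing inequality / preservation under post-processing). -/

import Mathlib

open MeasureTheory
open scoped ENNReal

/-- Data processing inequality for the alpha divergence
`D̃_α(P‖Q) = (∫ (dP/dQ)^α dQ − 1)/(α(α−1))`: restricting probability measures `P ≪ Q` to a
sub-σ-algebra `m ≤ m0` does not increase the alpha divergence, for every `α > 1`. -/
theorem alphaDivergence_trim_le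
    {X : Type*} {m0 : MeasurableSpace X} (m : MeasurableSpace X) (hm : m ≤ m0)
    (P Q : @Measure X m0)
    [IsProbabilityMeasure P] [IsProbabilityMeasure Q]
    (hPQ : P ≪ Q) (α : ℝ) (hα : 1 < α) :
    ((∫⁻ x, ((P.trim hm).rnDeriv (Q.trim hm) x) ^ α ∂(Q.trim hm)) - 1)
        / ENNReal.ofReal (α * (α - 1))
      ≤ ((∫⁻ x, (P.rnDeriv Q x) ^ α ∂Q) - 1) / ENNReal.ofReal (α * (α - 1)) := by
  have hα0 : (0 : ℝ) < α := lt_trans one_pos hα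
  have hα1 : (0 : ℝ) < α - 1 := sub_pos.2 hα
  set f := (P.trim hm).rnDeriv (Q.trim hm) with hf_def
  set g := P.rnDeriv Q with hg_def
  have hf_m : Measurable[m] f := Measure.measurable_rnDeriv _ _
  have hf_m0 : Measurable[m0] f := hf_m.mono hm le_rfl
  have hg_meas : Measurable[m0] g := Measure.measurable_rnDeriv _ _
  -- key identity: for `m`-measurable `h`, `∫ f·h dQ = ∫ g·h dQ`
  have key : ∀ h : X → ℝ≥0∞, Measurable[m] h →
      ∫⁻ x, f x * h x ∂Q = ∫⁻ x, g x * h x ∂Q := by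
    intro h hh
    have h1 : ∫⁻ x, f x * h x ∂(Q.trim hm) = ∫⁻ x, h x ∂(P.trim hm) :=
      lintegral_rnDeriv_mul (hPQ.trim hm) hh.aemeasurable
    have h2 : ∫⁻ x, f x * h x ∂(Q.trim hm) = ∫⁻ x, f x * h x ∂Q :=
      lintegral_trim hm (hf_m.mul hh)
    have h3 : ∫⁻ x, h x ∂(P.trim hm) = ∫⁻ x, h x ∂P := lintegral_trim hm hh
    have h4 : ∫⁻ x, g x * h x ∂Q = ∫⁻ x, h x ∂P :=
      lintegral_rnDeriv_mul hPQ ((hh.mono hm le_rfl)).aemeasurable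
    rw [← h2, h1, h3, h4]
  -- conjugate exponents
  have hpq : Real.HolderConjugate α (α / (α - 1)) := by
    exact (Real.holderConjugate_iff_eq_conjExponent hα).2 rfl
  set J := ∫⁻ x, g x ^ α ∂Q with hJ_def
  -- truncated key inequality
  have main : ∀ n : ℕ, ∫⁻ x, (min (f x) n) ^ α ∂Q ≤ J := by
    intro n
    set fn : X → ℝ≥0∞ := fun x => min (f x) n with hfn_def
    have hfn_m : Measurable[m] fn := hf_m.min measurable_const
    have hfn_m0 : Measurable[m0] fn := hfn_m.mono hm le_rfl
    set I := ∫⁻ x, fn x ^ α ∂Q with hI_def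
    have hI_fin : I ≠ ∞ := by
      have hle : I ≤ (n : ℝ≥0∞) ^ α * Q Set.univ := by
        rw [← lintegral_const]
        refine lintegral_mono fun x => ?_
        exact ENNReal.rpow_le_rpow (min_le_right _ _) hα0.le
      refine ne_top_of_le_ne_top ?_ hle
      simp [ENNReal.rpow_ne_top_of_nonneg hα0.le (ENNReal.natCast_ne_top n)]
    -- step 1: I ≤ ∫ f · fn^(α-1)
    have step1 : I ≤ ∫⁻ x, f x * fn x ^ (α - 1) ∂Q := by
      refine lintegral_mono fun x => ?_
      have : fn x ^ α = fn x * fn x ^ (α - 1) := by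
        nth_rw 1 [show α = 1 + (α - 1) by ring]
        rw [ENNReal.rpow_add_of_nonneg 1 (α - 1) zero_le_one hα1.le, ENNReal.rpow_one]
      rw [this]
      exact mul_le_mul_left (min_le_left _ _) _
    -- step 2: by key identity and Hölder
    have hfn_pow_m : Measurable[m] fun x => fn x ^ (α - 1) :=
      ENNReal.continuous_rpow_const.measurable.comp hfn_m
    have step2 : ∫⁻ x, f x * fn x ^ (α - 1) ∂Q = ∫⁻ x, g x * fn x ^ (α - 1) ∂Q :=
      key _ hfn_pow_m
    have holder : ∫⁻ x, g x * fn x ^ (α - 1) ∂Q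
        ≤ J ^ (1 / α) * (∫⁻ x, (fn x ^ (α - 1)) ^ (α / (α - 1)) ∂Q) ^ (1 / (α / (α - 1))) := by
      have ha1 : AEMeasurable g Q := hg_meas.aemeasurable
      have h2m : Measurable[m0] (fun x => fn x ^ (α - 1)) := hfn_pow_m.mono hm le_rfl
      have ha2 : AEMeasurable (fun x => fn x ^ (α - 1)) Q := h2m.aemeasurable
      exact @ENNReal.lintegral_mul_le_Lp_mul_Lq X m0 Q α (α / (α - 1)) hpq g (fun x => fn x ^ (α - 1)) ha1 ha2
    have hpow_eq : ∀ x, (fn x ^ (α - 1)) ^ (α / (α - 1)) = fn x ^ α := by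
      intro x
      rw [← ENNReal.rpow_mul]
      congr 1
      field_simp
    have hexp : 1 / (α / (α - 1)) = (α - 1) / α := by
      field_simp
    have holder' : ∫⁻ x, g x * fn x ^ (α - 1) ∂Q ≤ J ^ (1 / α) * I ^ ((α - 1) / α) := by
      calc ∫⁻ x, g x * fn x ^ (α - 1) ∂Q
          ≤ J ^ (1 / α) * (∫⁻ x, (fn x ^ (α - 1)) ^ (α / (α - 1)) ∂Q) ^ (1 / (α / (α - 1))) :=
            holder
        _ = J ^ (1 / α) * I ^ ((α - 1) / α) := by
            rw [hexp]
            congr 2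
            exact lintegral_congr fun x => by rw [hpow_eq x]
    have hIle : I ≤ J ^ (1 / α) * I ^ ((α - 1) / α) :=
      le_trans step1 (step2 ▸ holder')
    -- conclude I ≤ J
    by_cases hJ_top : J = ∞
    · simp [hJ_top]
    by_cases hI0 : I = 0
    · simp [hI0]
    have hIsplit : I = I ^ (1 / α) * I ^ ((α - 1) / α) := by
      rw [← ENNReal.rpow_add _ _ hI0 hI_fin]
      rw [show 1 / α + (α - 1) / α = 1 by field_simp; ring]
      rw [ENNReal.rpow_one]
    have hcancel : I ^ (1 / α) ≤ J ^ (1 / α) := by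
      have hc0 : I ^ ((α - 1) / α) ≠ 0 := by
        simp [ENNReal.rpow_eq_zero_iff, hI0, hI_fin]
      have hctop : I ^ ((α - 1) / α) ≠ ∞ := by
        simp [ENNReal.rpow_eq_top_iff, hI0, hI_fin]
      rw [← ENNReal.mul_le_mul_iff_left hc0 hctop]
      calc I ^ (1 / α) * I ^ ((α - 1) / α) = I := hIsplit.symm
        _ ≤ J ^ (1 / α) * I ^ ((α - 1) / α) := hIle
    have := ENNReal.rpow_le_rpow hcancel hα0.le
    rwa [← ENNReal.rpow_mul, ← ENNReal.rpow_mul, one_div,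
      inv_mul_cancel₀ hα0.ne', ENNReal.rpow_one, ENNReal.rpow_one] at this
  -- pass to the limit via monotone convergence
  have hItrim : ∫⁻ x, f x ^ α ∂(Q.trim hm) = ∫⁻ x, f x ^ α ∂Q :=
    lintegral_trim hm (ENNReal.continuous_rpow_const.measurable.comp hf_m)
  have hmono : Monotone fun (n : ℕ) (x : X) => (min (f x) n) ^ α := by
    intro a b hab x
    exact ENNReal.rpow_le_rpow (min_le_min le_rfl (by exact_mod_cast hab)) hα0.le
  have hsup : ∀ x, ⨆ n : ℕ, (min (f x) n) ^ α = f x ^ α := by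
    intro x
    refine le_antisymm (iSup_le fun n => ENNReal.rpow_le_rpow (min_le_left _ _) hα0.le) ?_
    by_cases hx : f x = ∞
    · have : ∀ n : ℕ, ((n : ℝ≥0∞)) ^ α = (min (f x) n) ^ α := by
        intro n; rw [hx]; simp
      have hle : ∀ n : ℕ, ((n : ℝ≥0∞)) ≤ ((n : ℝ≥0∞)) ^ α := by
        intro n
        calc ((n : ℝ≥0∞)) = ((n : ℝ≥0∞)) ^ (1 : ℝ) := (ENNReal.rpow_one _).symm
          _ ≤ ((n : ℝ≥0∞)) ^ α := by
            rcases Nat.eq_zero_or_pos n with h0 | hpos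
            · subst h0; simp [ENNReal.zero_rpow_of_pos hα0]
            · exact ENNReal.rpow_le_rpow_of_exponent_le
                (by exact_mod_cast Nat.one_le_iff_ne_zero.2 hpos.ne') hα.le
      have htop : ⨆ n : ℕ, ((n : ℝ≥0∞)) ^ α = ∞ := by
        rw [eq_top_iff]
        calc (⊤ : ℝ≥0∞) = ⨆ n : ℕ, ((n : ℝ≥0∞)) := ENNReal.iSup_natCast.symm
          _ ≤ ⨆ n : ℕ, ((n : ℝ≥0∞)) ^ α := iSup_mono hle
      calc f x ^ α ≤ ∞ := le_top
        _ = ⨆ n : ℕ, ((n : ℝ≥0∞)) ^ α := htop.symm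
        _ = ⨆ n : ℕ, (min (f x) n) ^ α := by exact iSup_congr this
    · obtain ⟨n, hn⟩ := ENNReal.exists_nat_gt hx
      calc f x ^ α = (min (f x) n) ^ α := by rw [min_eq_left hn.le]
        _ ≤ ⨆ n : ℕ, (min (f x) n) ^ α := le_iSup (fun n : ℕ => (min (f x) n) ^ α) n
  have hmain : ∫⁻ x, f x ^ α ∂Q ≤ J := by
    have hmeas : ∀ n : ℕ, Measurable[m0] (fun x => (min (f x) (n : ℝ≥0∞)) ^ α) :=
      fun n => ENNReal.continuous_rpow_const.measurable.comp (hf_m0.min measurable_const)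
    have hconv : ∫⁻ x, f x ^ α ∂Q = ⨆ n : ℕ, ∫⁻ x, (min (f x) n) ^ α ∂Q := by
      rw [← lintegral_iSup hmeas hmono]
      exact lintegral_congr fun x => (hsup x).symm
    rw [hconv]
    exact iSup_le main
  -- finish
  rw [hItrim]
  exact ENNReal.div_le_div_right (tsub_le_tsub_right hmain 1) _
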